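/- Let H be a real Hilbert space, let A, B : H ⇉ H be set-valued operators, let γ, δ > 0, let λ = 1 + δ/γ and μ = 1 + γ/δ, and let κ > 0. Suppose the resolvent J₁ := (Id + γA)^{-1} is single-valued. Define J₂ := (Id + δB)^{-1}, R₁ := (1 − λ)Id + λJ₁, R₂ := (1 − μ)Id + μJ₂, and T_aDR := (1 − κ)Id + κR₂R₁. Then J₁(Fix T_aDR) = zer(A + B), where Fix T_aDR := {x : x ∈ T_aDR(x)} and zer(A + B) := {x : 0 ∈ A(x) + B(x)}. -/

import Mathlib

open scoped Pointwise

/-- Fact: with `λ = 1 + δ/γ`, `μ = 1 + γ/δ` and `J₁` single-valued,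
`J₁(Fix T_aDR) = zer(A + B)`. -/
theorem aDR_fixedPoints_image {H : Type*} [NormedAddCommGroup H] [InnerProductSpace ℝ H]
    [CompleteSpace H] (A B : H → Set H) (γ δ lam mu κ : ℝ)
    (hγ : 0 < γ) (hδ : 0 < δ) (hlam : lam = 1 + δ / γ) (hmu : mu = 1 + γ / δ)
    (hκ : 0 < κ)
    (J₁ : H → Set H) (hJ₁ : ∀ z, J₁ z = {x : H | z - x ∈ γ • A x})
    (J₂ : H → Set H) (hJ₂ : ∀ z, J₂ z = {x : H | z - x ∈ δ • B x})
    (hsv : ∀ z, ∀ x ∈ J₁ z, ∀ x' ∈ J₁ z, x = x')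
    (R₁ : H → Set H) (hR₁ : ∀ z, R₁ z = (fun x => (1 - lam) • z + lam • x) '' J₁ z)
    (R₂ : H → Set H) (hR₂ : ∀ z, R₂ z = (fun x => (1 - mu) • z + mu • x) '' J₂ z)
    (T : H → Set H)
    (hT : ∀ z, T z = (fun w => (1 - κ) • z + κ • w) '' (⋃ y ∈ R₁ z, R₂ y)) :
    {x : H | ∃ z ∈ {w : H | w ∈ T w}, x ∈ J₁ z} =
      {x : H | (0 : H) ∈ A x + B x} := by
  have hγ' : γ ≠ 0 := hγ.ne'
  have hδ' : δ ≠ 0 := hδ.ne'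
  have hmu0 : mu ≠ 0 := by rw [hmu]; positivity
  have h1 : (1 - mu) * (1 - lam) = 1 := by
    rw [hmu, hlam, show (1 - (1 + γ / δ)) = -(γ/δ) from by ring,
      show (1 - (1 + δ / γ)) = -(δ/γ) from by ring, neg_mul_neg, div_mul_div_comm,
      mul_comm γ δ, div_self (by positivity)]
  have h2 : (1 - mu) * lam = -mu := by
    rw [hmu, hlam]
    field_simp
    ring
  have h5 : (1 - lam) * γ = -δ := by
    rw [hlam]
    field_simp
    ring
  ext x
  simp only [Set.mem_setOf_eq]
  constructor
  · rintro ⟨z, hz, hx⟩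
    rw [hT] at hz
    obtain ⟨w, hw, hwz⟩ := hz
    beta_reduce at hwz
    have hwz' : w = z := by
      apply smul_right_injective H hκ.ne'
      show κ • w = κ • z
      linear_combination (norm := module) hwz
    rw [hwz'] at hw
    simp only [Set.mem_iUnion, exists_prop] at hw
    obtain ⟨y, hy, hzy⟩ := hw
    rw [hR₁] at hy
    obtain ⟨x₀, hx₀, hyx₀⟩ := hy
    beta_reduce at hyx₀
    have hx0x : x₀ = x := hsv z x₀ hx₀ x hx
    subst hx0x
    rw [hR₂] at hzy
    obtain ⟨u, hu, huz⟩ := hzy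
    beta_reduce at huz
    rw [hJ₂] at hu
    obtain ⟨b, hb, hbu⟩ := hu
    beta_reduce at hbu
    rw [hJ₁] at hx
    obtain ⟨a, ha, haz⟩ := hx
    beta_reduce at haz
    -- show u = x₀ = x
    have h3 : mu • u = (1 - (1 - mu) * (1 - lam)) • z - ((1 - mu) * lam) • x₀ := by
      rw [← hyx₀] at huz
      linear_combination (norm := module) huz
    rw [h1, h2] at h3
    have hux : u = x₀ := by
      apply smul_right_injective H hmu0
      show mu • u = mu • x₀
      rw [h3]; module
    subst hux
    -- show b = -a
    have h4 : δ • b = ((1 - lam) * γ) • a := by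
      rw [mul_smul, haz, hbu, ← hyx₀]
      module
    rw [h5] at h4
    have hba : b = -a := by
      apply smul_right_injective H hδ'
      show δ • b = δ • (-a)
      rw [h4]; module
    rw [Set.mem_add]
    exact ⟨a, ha, b, hb, by rw [hba]; simp⟩
  · intro h
    rw [Set.mem_add] at h
    obtain ⟨a, ha, b, hb, hab⟩ := h
    have hba : b = -a := (neg_eq_of_add_eq_zero_right hab).symm
    have hxJ : x ∈ J₁ (x + γ • a) := by
      rw [hJ₁]
      show x + γ • a - x ∈ γ • A x
      rw [add_sub_cancel_left]
      exact Set.smul_mem_smul_set ha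
    refine ⟨x + γ • a, ?_, hxJ⟩
    rw [hT]
    refine ⟨x + γ • a, ?_, by beta_reduce; module⟩
    simp only [Set.mem_iUnion, exists_prop]
    refine ⟨(1 - lam) • (x + γ • a) + lam • x, ?_, ?_⟩
    · rw [hR₁]
      exact ⟨x, hxJ, rfl⟩
    · rw [hR₂]
      refine ⟨x, ?_, ?_⟩
      · rw [hJ₂]
        show (1 - lam) • (x + γ • a) + lam • x - x ∈ δ • B x
        have heq : (1 - lam) • (x + γ • a) + lam • x - x = δ • b := by
          rw [hba, show δ • (-a) = (-δ) • a from by module, ← h5]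
          module
        rw [heq]
        exact Set.smul_mem_smul_set hb
      · beta_reduce
        show (1 - mu) • ((1 - lam) • (x + γ • a) + lam • x) + mu • x = x + γ • a
        have e1 : ((1 - mu) * (1 - lam)) • (x + γ • a) + ((1 - mu) * lam + mu) • x
            = x + γ • a := by
          rw [h1, show (1 - mu) * lam + mu = 0 from by rw [h2]; ring]
          module
        linear_combination (norm := module) e1
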